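/- The complete k-partite graph K_{2,2,...,2} with k parts of size 2 contains no K_t-subdivision for any t > ⌊3k/2⌋. -/

import Mathlib

/-- The complete `k`-partite graph `K_{2,2,…,2}` with `k` parts of size `2`: vertices are
pairs `(i, j)` with `i ∈ Fin k`, `j ∈ Fin 2`, and two vertices are adjacent iff they lie
in different parts. -/
def cocktailParty (k : ℕ) : SimpleGraph (Fin k × Fin 2) where
  Adj u v := u.1 ≠ v.1
  symm := ⟨fun _ _ h => h.symm⟩
  loopless := ⟨fun _ h => h rfl⟩

/-- `G` contains a subdivision of `H`: an injective map of branch vertices together with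
internally vertex-disjoint paths (whose internal vertices avoid branch vertices)
for each edge of `H`. -/
def ContainsSubdivision {V : Type*} {W : Type*} (G : SimpleGraph V) (H : SimpleGraph W) : Prop :=
  ∃ (f : W → V) (p : ∀ ⦃u v : W⦄, H.Adj u v → G.Walk (f u) (f v)),
    Function.Injective f ∧
    (∀ (u v : W) (h : H.Adj u v), (p h).IsPath) ∧
    (∀ (u v : W) (h : H.Adj u v), ∀ x ∈ (p h).support.tail.dropLast, x ∉ Set.range f) ∧
    (∀ (u v u' v' : W) (h : H.Adj u v) (h' : H.Adj u' v'), s(u, v) ≠ s(u', v') →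
      ∀ x ∈ (p h).support.tail.dropLast, x ∉ (p h').support.tail.dropLast)

lemma two_le_length_of_walk {V : Type*} {G : SimpleGraph V} {a b : V} (w : G.Walk a b)
    (hab : a ≠ b) (hadj : ¬ G.Adj a b) : 2 ≤ w.length := by
  cases w with
  | nil => exact absurd rfl hab
  | cons h q =>
    cases q with
    | nil => exact absurd h hadj
    | cons h' q' => simp only [SimpleGraph.Walk.length_cons]; omega

/-- `K_{2,2,…,2}` with `k` parts of size `2` has no `K_t`-subdivision for any
`t > ⌊3k/2⌋`. -/
theorem cocktailParty_no_subdivision (k t : ℕ) (ht : 3 * k / 2 < t) :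
    ¬ ContainsSubdivision (cocktailParty k) (⊤ : SimpleGraph (Fin t)) := by
  rintro ⟨f, p, hinj, hpath, hint, hdisj⟩
  classical
  set T : Finset (Fin k × Fin 2) := Finset.image f Finset.univ with hTdef
  have hTcard : T.card = t := by
    rw [hTdef, Finset.card_image_of_injective _ hinj, Finset.card_univ, Fintype.card_fin]
  have hmemT : ∀ x, x ∈ T ↔ x ∈ Set.range f := by
    intro x; simp [hTdef]
  set A : Finset (Fin k) := Finset.univ.filter (fun i => (i, 0) ∈ T ∧ (i, 1) ∈ T) with hAdef
  -- property of a chosen internal vertex for a part in A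
  have key : ∀ i : Fin k, ∃ x : Fin k × Fin 2, i ∈ A →
      x ∉ Set.range f ∧ ∃ (u v : Fin t) (h : (⊤ : SimpleGraph (Fin t)).Adj u v),
        f u = (i, 0) ∧ f v = (i, 1) ∧ x ∈ (p h).support.tail.dropLast := by
    intro i
    by_cases hi : i ∈ A
    · rw [hAdef, Finset.mem_filter] at hi
      obtain ⟨-, h0, h1⟩ := hi
      rw [hmemT] at h0 h1
      obtain ⟨u, hu⟩ := h0
      obtain ⟨v, hv⟩ := h1
      have huv : u ≠ v := by
        intro h; rw [h, hv] at hu; simp [Prod.ext_iff] at hu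
      have h : (⊤ : SimpleGraph (Fin t)).Adj u v := huv
      have hlen : 2 ≤ (p h).length := by
        apply two_le_length_of_walk (p h)
        · rw [hu, hv]; intro hh; simp [Prod.ext_iff] at hh
        · rw [hu, hv]; intro hh; exact absurd rfl (show ((i, 0) : Fin k × Fin 2).1 ≠ (i, 1).1 from hh)
      have hne : (p h).support.tail.dropLast ≠ [] := by
        apply List.ne_nil_of_length_pos
        rw [List.length_dropLast, List.length_tail, SimpleGraph.Walk.length_support]
        omega
      obtain ⟨x, hx⟩ := List.exists_mem_of_ne_nil _ hne
      exact ⟨x, fun _ => ⟨hint u v h x hx, u, v, h, hu, hv, hx⟩⟩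
    · exact ⟨(i, 0), fun h => absurd h hi⟩
  choose g hg using key
  -- claim 1 : t + A.card ≤ 2 * k
  have hc1 : A.card ≤ 2 * k - t := by
    have : A.card ≤ Tᶜ.card := by
      apply Finset.card_le_card_of_injOn g
      · intro i hi
        rw [Finset.mem_coe, Finset.mem_compl, hmemT]
        exact (hg i hi).1
      · intro i hi i' hi' hgg
        by_contra hne
        obtain ⟨_, u, v, h, hu, hv, hx⟩ := hg i hi
        obtain ⟨_, u', v', h', hu', hv', hx'⟩ := hg i' hi'
        have hedge : s(u, v) ≠ s(u', v') := by
          intro he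
          rw [Sym2.eq_iff] at he
          rcases he with ⟨h1, h2⟩ | ⟨h1, h2⟩
          · subst h1; rw [hu] at hu'
            exact hne (congrArg Prod.fst hu')
          · subst h1; rw [hu] at hv'
            simp [Prod.ext_iff] at hv'
        rw [hgg] at hx
        exact hdisj u v u' v' h h' hedge _ hx hx'
    have hcompl : Tᶜ.card = 2 * k - t := by
      rw [Finset.card_compl, hTcard]
      congr 1
      simp [Fintype.card_prod, Fintype.card_fin]
      ring
    omega
  -- claim 2 : t ≤ k + A.card
  have hc2 : t ≤ k + A.card := by
    set F : Fin k × Fin 2 → Fin k ⊕ Fin k :=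
      fun x => if x.1 ∈ A ∧ x.2 = 1 then Sum.inr x.1 else Sum.inl x.1 with hFdef
    have := Finset.card_le_card_of_injOn F
      (s := T) (t := Finset.univ.image Sum.inl ∪ A.image Sum.inr) ?_ ?_
    · have hcard : (Finset.univ.image Sum.inl ∪ A.image Sum.inr : Finset (Fin k ⊕ Fin k)).card
          ≤ k + A.card := by
        calc (Finset.univ.image Sum.inl ∪ A.image Sum.inr : Finset (Fin k ⊕ Fin k)).card
            ≤ (Finset.univ.image Sum.inl : Finset (Fin k ⊕ Fin k)).card
              + (A.image Sum.inr).card := Finset.card_union_le _ _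
          _ ≤ k + A.card := by
              gcongr
              · exact (Finset.card_image_le).trans (by simp)
              · exact Finset.card_image_le
      omega
    · intro x hx
      rw [hFdef]
      by_cases hc : x.1 ∈ A ∧ x.2 = 1
      · simp only [hc, if_true]
        exact Finset.mem_union_right _ (Finset.mem_image_of_mem _ hc.1)
      · simp only [hc, if_false]
        exact Finset.mem_union_left _ (Finset.mem_image_of_mem _ (Finset.mem_univ _))
    · intro x hx y hy hxy
      rw [hFdef] at hxy
      by_cases hcx : x.1 ∈ A ∧ x.2 = 1 <;> by_cases hcy : y.1 ∈ A ∧ y.2 = 1 <;>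
        simp only [hcx, hcy, if_true, if_false] at hxy
      · obtain h1 := Sum.inr.inj hxy
        exact Prod.ext h1 (hcx.2.trans hcy.2.symm)
      · exact absurd hxy (by simp)
      · exact absurd hxy (by simp)
      · obtain h1 := Sum.inl.inj hxy
        apply Prod.ext h1
        -- x.2 = y.2 : both in Fin 2, neither case (mem A and snd = 1) holds
        have hx2 : x.2 = 0 ∨ x.2 = 1 := by omega
        have hy2 : y.2 = 0 ∨ y.2 = 1 := by omega
        rcases hx2 with hx2 | hx2 <;> rcases hy2 with hy2 | hy2
        · rw [hx2, hy2]
        · -- x.2 = 0, y.2 = 1 : then y.1 ∉ A but (y.1,0)=(x) ∈ T and (y.1,1)=y ∈ T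
          exfalso
          apply hcy
          refine ⟨?_, hy2⟩
          rw [hAdef, Finset.mem_filter]
          refine ⟨Finset.mem_univ _, ?_, ?_⟩
          · rw [← h1, ← hx2]; exact hx
          · rw [← hy2]; exact hy
        · exfalso
          apply hcx
          refine ⟨?_, hx2⟩
          rw [hAdef, Finset.mem_filter]
          refine ⟨Finset.mem_univ _, ?_, ?_⟩
          · rw [h1, ← hy2]; exact hy
          · rw [← hx2]; exact hx
        · rw [hx2, hy2]
  omega
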